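/- Let N ∈ ℕ, m a positive integer, and c₀, D > 0 with c₀DN^{-1/4} ≤ 1/2 and m ≤ 2N^{1/2}/D². If Q₁,…,Q_m are unit vectors in an inner product space satisfying |⟨Q_j,Q_k⟩| ≤ (cos(c₀DN^{-1/4}/2))^{2N} for all j ≠ k, then ‖Q₁+⋯+Q_m‖² ≥ m − (4N/D⁴)·exp(−c₀²D²N^{1/2}/24). -/

import Mathlib

open Finset

set_option maxHeartbeats 1000000 in
theorem almost_orthogonal_lower_bound
    {E : Type*} [NormedAddCommGroup E] [InnerProductSpace ℂ E]
    (N m : ℕ) (hm : 1 ≤ m) (c₀ D : ℝ) (hc₀ : 0 < c₀) (hD : 0 < D)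
    (hsmall : c₀ * D * (N : ℝ) ^ (-(1/4 : ℝ)) ≤ 1/2)
    (hmle : (m : ℝ) ≤ 2 * Real.sqrt N / D^2)
    (Q : Fin m → E) (hunit : ∀ j, ‖Q j‖ = 1)
    (hovlp : ∀ j k, j ≠ k →
      ‖(inner ℂ (Q j) (Q k) : ℂ)‖ ≤ (Real.cos (c₀ * D * (N : ℝ) ^ (-(1/4 : ℝ)) / 2))^(2*N)) :
    (m : ℝ) - (4 * (N : ℝ) / D^4) * Real.exp (-(c₀^2 * D^2 * Real.sqrt N) / 24)
      ≤ ‖∑ j, Q j‖^2 := by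
  -- N ≥ 1
  have hN1 : (1:ℝ) ≤ (N:ℝ) := by
    rcases Nat.eq_zero_or_pos N with h | h
    · exfalso
      subst h
      simp at hmle
      have : (1:ℝ) ≤ (m:ℝ) := by exact_mod_cast hm
      linarith
    · exact_mod_cast h
  have hNpos : (0:ℝ) < (N:ℝ) := by linarith
  set x : ℝ := c₀ * D * (N : ℝ) ^ (-(1/4 : ℝ)) with hxdef
  have hxpos : 0 < x := by
    have := Real.rpow_pos_of_pos hNpos (-(1/4 : ℝ))
    positivity
  set β : ℝ := x / 2 with hβdef
  have hβpos : 0 < β := by positivity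
  have hβle : β ≤ 1/4 := by
    simp only [hβdef]; linarith
  set ε : ℝ := (Real.cos β)^(2*N) with hεdef
  have hcosnn : 0 ≤ Real.cos β := by
    apply Real.cos_nonneg_of_mem_Icc
    constructor
    · have := Real.pi_gt_three; linarith
    · have := Real.pi_gt_three; linarith
  have hεnn : 0 ≤ ε := pow_nonneg hcosnn _
  -- cos β ≤ 1 - β^2/3
  have hcosb : Real.cos β ≤ 1 - β^2/3 := by
    have hb := Real.cos_bound (show |β| ≤ 1 by rw [abs_of_nonneg hβpos.le]; linarith)
    rw [abs_le] at hb
    have h4 : |β| ^ 4 = β^4 := by rw [abs_of_nonneg hβpos.le]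
    rw [h4] at hb
    have hβ4 : β^4 ≤ β^2/16 := by nlinarith [sq_nonneg β, sq_nonneg (β^2 - β/4)]
    linarith [hb.2]
  -- cos β ≤ exp (-(β^2/3))
  have hcose : Real.cos β ≤ Real.exp (-(β^2/3)) := by
    have := Real.add_one_le_exp (-(β^2/3))
    linarith
  -- ε ≤ exp (-(c₀^2 * D^2 * √N)/24)
  have hsq : ((N:ℝ)^(-(1/4:ℝ)))^2 = (N:ℝ)^(-(1/2:ℝ)) := by
    rw [← Real.rpow_natCast ((N:ℝ)^(-(1/4:ℝ))) 2, ← Real.rpow_mul hNpos.le]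
    norm_num
  have hNs : (N:ℝ) * (N:ℝ)^(-(1/2:ℝ)) = Real.sqrt N := by
    have h := Real.rpow_add hNpos 1 (-(1/2:ℝ))
    rw [Real.sqrt_eq_rpow]
    rw [Real.rpow_one] at h
    rw [← h]
    norm_num
  have hβsq : (2*(N:ℝ)) * (β^2/3) = c₀^2 * D^2 * Real.sqrt N / 6 := by
    have : β^2 = c₀^2 * D^2 * ((N:ℝ)^(-(1/4:ℝ)))^2 / 4 := by
      simp only [hβdef, hxdef]; ring
    rw [this, hsq, ← hNs]
    ring
  have hεexp : ε ≤ Real.exp (-(c₀^2 * D^2 * Real.sqrt N) / 24) := by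
    have h1 : ε ≤ (Real.exp (-(β^2/3)))^(2*N) := pow_le_pow_left₀ hcosnn hcose _
    have h2 : (Real.exp (-(β^2/3)))^(2*N) = Real.exp ((2*N : ℕ) * (-(β^2/3))) := by
      rw [Real.exp_nat_mul]
    have h3 : ((2*N : ℕ) : ℝ) * (-(β^2/3)) = -(c₀^2 * D^2 * Real.sqrt N / 6) := by
      push_cast
      rw [← hβsq]; ring
    have hsnn : 0 ≤ Real.sqrt (N:ℝ) := Real.sqrt_nonneg _
    have h5 : Real.exp (-(c₀^2 * D^2 * Real.sqrt N / 6)) ≤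
        Real.exp (-(c₀^2 * D^2 * Real.sqrt N) / 24) := by
      apply Real.exp_le_exp.2
      nlinarith [sq_nonneg c₀, sq_nonneg D, mul_nonneg (mul_nonneg (sq_nonneg c₀) (sq_nonneg D)) hsnn]
    calc ε ≤ (Real.exp (-(β^2/3)))^(2*N) := h1
      _ = Real.exp (-(c₀^2 * D^2 * Real.sqrt N / 6)) := by rw [h2, h3]
      _ ≤ _ := h5
  -- m² ≤ 4N/D⁴
  have hm2 : (m:ℝ)^2 ≤ 4 * (N:ℝ) / D^4 := by
    have hs : Real.sqrt (N:ℝ) ^ 2 = (N:ℝ) := Real.sq_sqrt hNpos.le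
    have hmnn : (0:ℝ) ≤ m := Nat.cast_nonneg m
    have hD2 : (0:ℝ) < D^2 := by positivity
    have h1 : (m:ℝ) * D^2 ≤ 2 * Real.sqrt N := by
      rw [div_eq_mul_inv] at hmle
      calc (m:ℝ) * D^2 ≤ (2 * Real.sqrt N * (D^2)⁻¹) * D^2 := by
            apply mul_le_mul_of_nonneg_right hmle hD2.le
        _ = 2 * Real.sqrt N := by field_simp
    have h2 : ((m:ℝ) * D^2)^2 ≤ (2 * Real.sqrt N)^2 := by
      apply sq_le_sq' _ h1
      nlinarith [Real.sqrt_nonneg (N:ℝ)]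
    have h3 : (m:ℝ)^2 * D^4 ≤ 4 * (N:ℝ) := by nlinarith
    rw [le_div_iff₀ (by positivity : (0:ℝ) < D^4)]
    linarith
  -- key expansion
  have expand : ‖∑ j, Q j‖^2 = ∑ j, ∑ k, (inner ℂ (Q j) (Q k) : ℂ).re := by
    have h1 : (inner ℂ (∑ j, Q j) (∑ j, Q j) : ℂ) = ∑ j, ∑ k, (inner ℂ (Q j) (Q k) : ℂ) := by
      rw [sum_inner]
      exact Finset.sum_congr rfl (fun j _ => inner_sum _ _ _)
    have h2 : ((inner ℂ (∑ j, Q j) (∑ j, Q j) : ℂ)).re = ‖∑ j, Q j‖^2 := by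
      rw [← RCLike.re_to_complex]
      exact inner_self_eq_norm_sq _
    rw [← h2, h1]
    simp [Complex.re_sum]
  have hterm : ∀ j k : Fin m, (if j = k then (1:ℝ) else -ε) ≤ (inner ℂ (Q j) (Q k) : ℂ).re := by
    intro j k
    by_cases h : j = k
    · subst h
      simp only [if_pos rfl]
      have : ((inner ℂ (Q j) (Q j) : ℂ)).re = ‖Q j‖^2 := by
        rw [← RCLike.re_to_complex]
        exact inner_self_eq_norm_sq _
      rw [this, hunit j]; norm_num
    · simp only [if_neg h]
      have h1 := hovlp j k h
      have h2 : |(inner ℂ (Q j) (Q k) : ℂ).re| ≤ ‖(inner ℂ (Q j) (Q k) : ℂ)‖ := by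
        exact Complex.abs_re_le_norm _
      have h3 := neg_abs_le ((inner ℂ (Q j) (Q k) : ℂ)).re
      simp only [hεdef]
      linarith
  have hsum : (m:ℝ) - (m:ℝ)^2 * ε ≤ ∑ j, ∑ k, (inner ℂ (Q j) (Q k) : ℂ).re := by
    have h1 : ∑ j : Fin m, ∑ k : Fin m, (if j = k then (1:ℝ) else -ε) ≤
        ∑ j, ∑ k, (inner ℂ (Q j) (Q k) : ℂ).re := by
      apply Finset.sum_le_sum
      intro j _
      exact Finset.sum_le_sum (fun k _ => hterm j k)
    have h2 : ∀ j : Fin m, ∑ k, (if j = k then (1:ℝ) else -ε) = (1+ε) - (m:ℝ)*ε := by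
      intro j
      have : ∀ k : Fin m, (if j = k then (1:ℝ) else -ε) =
          (if j = k then (1:ℝ)+ε else 0) + (-ε) := by
        intro k; by_cases h : j = k <;> simp [h]
      rw [Finset.sum_congr rfl (fun k _ => this k)]
      rw [Finset.sum_add_distrib, Finset.sum_ite_eq]
      simp
      ring
    have h3 : ∑ j : Fin m, ∑ k : Fin m, (if j = k then (1:ℝ) else -ε) = (m:ℝ) * ((1+ε) - (m:ℝ)*ε) := by
      rw [Finset.sum_congr rfl (fun j _ => h2 j)]
      simp [Finset.sum_const, Finset.card_univ]
      ring
    have hmnn : (0:ℝ) ≤ m := Nat.cast_nonneg m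
    nlinarith [h1, h3, mul_nonneg hmnn hεnn]
  rw [expand]
  have hfin : (4 * (N:ℝ) / D^4) * Real.exp (-(c₀^2 * D^2 * Real.sqrt N) / 24) ≥ (m:ℝ)^2 * ε := by
    apply mul_le_mul hm2 hεexp hεnn (by positivity)
  linarith
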